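/- Let φ^k, φ^{k+1}, r^{k+1/2}, r^{k-1/2}, S be real numbers satisfying (r^{k+1/2} + r^{k-1/2})/2 = φ^k(1 - φ^k) - S. Then ((1/2)r^{k+1/2} + S/2)·(1 - (φ^{k+1}+φ^k))·(φ^{k+1} - φ^k) = (1/2)(r^{k+1/2}+S)(φ^{k+1} - (φ^{k+1})^2 - S) - (1/2)(r^{k-1/2}+S)(φ^k - (φ^k)^2 - S) - (1/4)((r^{k+1/2})^2 - (r^{k-1/2})^2). -/
import Mathlib


theorem stmt_3 (φk φk1 rp rm S : ℝ)
    (h : (rp + rm)/2 = φk*(1 - φk) - S) :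
    ((1/2)*rp + S/2) * (1 - (φk1 + φk)) * (φk1 - φk) =
      (1/2)*(rp + S)*(φk1 - φk1^2 - S) - (1/2)*(rm + S)*(φk - φk^2 - S)
        - (1/4)*(rp^2 - rm^2) := by
  have h2 : rm = 2*(φk*(1-φk) - S) - rp := by linarith
  subst h2; ring
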